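/- For all 0 ≤ s ≤ t, the random variable Λ_{t∧τ} − Λ_{s∧τ} is integrable and, almost surely, E[Λ_{t∧τ} − Λ_{s∧τ} | ℱ_s] = 1_{{s<τ}} · (1 − E[e^{−(Λ_t − Λ_s)} | 𝔉̂_s]). -/

import Mathlib

open MeasureTheory
open scoped ENNReal

/-- Every set in `m ⊔ σ({r<τ} : r ≤ s)` agrees on `{s < τ}` with a set in `m`. -/
lemma stmt9_aux_sigma {Ω : Type*} (m : MeasurableSpace Ω) (τ : Ω → ℝ) (s : ℝ) (hs : 0 ≤ s)
    (A : Set Ω)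
    (hA : MeasurableSet[m ⊔ MeasurableSpace.generateFrom
        {A | ∃ r : ℝ, 0 ≤ r ∧ r ≤ s ∧ A = {ω | r < τ ω}}] A) :
    ∃ B, MeasurableSet[m] B ∧ A ∩ {ω | s < τ ω} = B ∩ {ω | s < τ ω} := by
  set S : Set Ω := {ω | s < τ ω} with hS
  let P : Set Ω → Prop := fun A => ∃ B, MeasurableSet[m] B ∧ A ∩ S = B ∩ S
  let m' : MeasurableSpace Ω :=
    { MeasurableSet' := P
      measurableSet_empty := ⟨∅, MeasurableSet.empty, rfl⟩
      measurableSet_compl := by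
        rintro A ⟨B, hB, hAB⟩
        refine ⟨Bᶜ, hB.compl, ?_⟩
        ext ω
        have h := Set.ext_iff.mp hAB ω
        by_cases hω : ω ∈ S
        · have h' : ω ∈ A ↔ ω ∈ B := by
            constructor
            · intro h1; exact ((Set.ext_iff.mp hAB ω).mp ⟨h1, hω⟩).1
            · intro h1; exact ((Set.ext_iff.mp hAB ω).mpr ⟨h1, hω⟩).1
          simp only [Set.mem_inter_iff, Set.mem_compl_iff, hω, and_true]
          exact not_congr h'
        · simp [hω]
      measurableSet_iUnion := by
        rintro f hf
        choose B hB hAB using hf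
        refine ⟨⋃ i, B i, MeasurableSet.iUnion hB, ?_⟩
        ext ω
        by_cases hω : ω ∈ S
        · simp only [Set.mem_inter_iff, Set.mem_iUnion, hω, and_true]
          constructor
          · rintro ⟨i, hi⟩
            exact ⟨i, ((Set.ext_iff.mp (hAB i) ω).mp ⟨hi, hω⟩).1⟩
          · rintro ⟨i, hi⟩
            exact ⟨i, ((Set.ext_iff.mp (hAB i) ω).mpr ⟨hi, hω⟩).1⟩
        · simp [hω] }
  have hle : m ⊔ MeasurableSpace.generateFrom
      {A | ∃ r : ℝ, 0 ≤ r ∧ r ≤ s ∧ A = {ω | r < τ ω}} ≤ m' := by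
    refine sup_le ?_ ?_
    · intro A hA
      exact ⟨A, hA, rfl⟩
    · refine MeasurableSpace.generateFrom_le ?_
      rintro A ⟨r, hr0, hrs, rfl⟩
      refine ⟨Set.univ, MeasurableSet.univ, ?_⟩
      rw [Set.univ_inter]
      apply Set.inter_eq_right.mpr
      intro ω hω
      exact lt_of_le_of_lt hrs hω
  exact hle A hA

/-- lintegral form of the survival identity: for `m`-measurable `g`,
`∫⁻_{u<τ} g = ∫⁻ g · e^{-Λ_u}`. -/
lemma stmt9_aux_lint {Ω : Type*} {m : MeasurableSpace Ω} {m0 : MeasurableSpace Ω}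
    (μ : Measure Ω) [IsProbabilityMeasure μ] (hm : m ≤ m0)
    {τ : Ω → ℝ} (hτ : Measurable τ) (u : ℝ) {G : Ω → ℝ}
    (hGmeas : Measurable[m] G) (hGnn : ∀ ω, 0 ≤ G ω) (hG1 : ∀ ω, G ω ≤ 1)
    (hsurv : μ[Set.indicator {ω | u < τ ω} (fun _ => (1:ℝ)) | m] =ᵐ[μ] G)
    {g : Ω → ℝ≥0∞} (hg : Measurable[m] g) :
    ∫⁻ ω in {ω | u < τ ω}, g ω ∂μ = ∫⁻ ω, g ω * ENNReal.ofReal (G ω) ∂μ := by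
  have hS : MeasurableSet[m0] {ω | u < τ ω} := measurableSet_lt measurable_const hτ
  have hGmeas0 : Measurable[m0] G := hGmeas.mono hm le_rfl
  have hg0 : Measurable[m0] g := hg.mono hm le_rfl
  set ν₁ : @Measure Ω m0 := μ.restrict {ω | u < τ ω} with hν₁
  set ν₂ : @Measure Ω m0 := μ.withDensity (fun ω => ENNReal.ofReal (G ω)) with hν₂
  have htrim : ν₁.trim hm = ν₂.trim hm := by
    refine @Measure.ext Ω m _ _ (fun C hC => ?_)
    have hC0 : MeasurableSet[m0] C := hm C hC
    rw [trim_measurableSet_eq hm hC, trim_measurableSet_eq hm hC]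
    have h1 : ν₁ C = μ ({ω | u < τ ω} ∩ C) := by
      rw [hν₁, Measure.restrict_apply hC0, Set.inter_comm]
    have h2 : ν₂ C = ∫⁻ ω in C, ENNReal.ofReal (G ω) ∂μ := by
      rw [hν₂, withDensity_apply _ hC0]
    rw [h1, h2]
    -- real-valued computation via the conditional expectation hypothesis
    have hind : Integrable (Set.indicator {ω | u < τ ω} (fun _ => (1:ℝ))) μ := by
      refine Integrable.mono' (integrable_const (1:ℝ))
        ((aestronglyMeasurable_const.indicator hS)) ?_
      refine Filter.Eventually.of_forall fun ω => ?_
      by_cases hω : ω ∈ {ω | u < τ ω} <;> simp [Set.indicator_apply, hω]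
    have hreal : ∫ ω in C, Set.indicator {ω | u < τ ω} (fun _ => (1:ℝ)) ω ∂μ
        = ∫ ω in C, G ω ∂μ := by
      rw [← setIntegral_condExp hm hind hC]
      exact setIntegral_congr_ae hC0 (hsurv.mono fun ω h _ => h)
    have hlhs : ∫ ω in C, Set.indicator {ω | u < τ ω} (fun _ => (1:ℝ)) ω ∂μ
        = (μ ({ω | u < τ ω} ∩ C)).toReal := by
      rw [integral_indicator hS, setIntegral_const, measureReal_def, Measure.restrict_apply hS]
      simp
    have hrhs : ∫ ω in C, G ω ∂μ
        = (∫⁻ ω in C, ENNReal.ofReal (G ω) ∂μ).toReal := by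
      rw [integral_eq_lintegral_of_nonneg_ae
        (Filter.Eventually.of_forall fun ω => hGnn ω)
        (hGmeas0.aestronglyMeasurable)]
    have hfin1 : μ ({ω | u < τ ω} ∩ C) ≠ ∞ := (measure_lt_top μ _).ne
    have hfin2 : ∫⁻ ω in C, ENNReal.ofReal (G ω) ∂μ ≠ ∞ := by
      refine ne_of_lt (lt_of_le_of_lt ?_ (measure_lt_top (μ.restrict C) Set.univ))
      calc ∫⁻ ω in C, ENNReal.ofReal (G ω) ∂μ ≤ ∫⁻ _ in C, 1 ∂μ := by
            refine lintegral_mono fun ω => ?_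
            exact ENNReal.ofReal_le_of_le_toReal (by simpa using hG1 ω)
        _ = μ.restrict C Set.univ := by simp
    have := hlhs ▸ hrhs ▸ hreal
    exact (ENNReal.toReal_eq_toReal_iff' hfin1 hfin2).mp this
  have e1 : ∫⁻ ω, g ω ∂ν₁ = ∫⁻ ω, g ω ∂(ν₁.trim hm) := (lintegral_trim hm hg).symm
  have e2 : ∫⁻ ω, g ω ∂(ν₂.trim hm) = ∫⁻ ω, g ω ∂ν₂ := lintegral_trim hm hg
  have e3 : ∫⁻ ω, g ω ∂ν₂ = ∫⁻ ω, g ω * ENNReal.ofReal (G ω) ∂μ := by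
    rw [hν₂, lintegral_withDensity_eq_lintegral_mul μ
      (hGmeas0.ennreal_ofReal) hg0]
    simp [mul_comm]
  calc ∫⁻ ω in {ω | u < τ ω}, g ω ∂μ = ∫⁻ ω, g ω ∂ν₁ := rfl
    _ = ∫⁻ ω, g ω ∂(ν₁.trim hm) := e1
    _ = ∫⁻ ω, g ω ∂(ν₂.trim hm) := by rw [htrim]
    _ = ∫⁻ ω, g ω * ENNReal.ofReal (G ω) ∂μ := e2.trans e3

/-- Telescoping structure of the lower Riemann–Stieltjes sum. -/
lemma stmt9_aux_tele (v : ℕ → ℝ) (φ : ℝ → ℝ) (θ : ℝ) (hv : Monotone v) (N : ℕ) :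
    ∃ K, K ≤ N ∧
      (∑ i ∈ Finset.range N, if v (i+1) < θ then φ (v (i+1)) - φ (v i) else 0)
        = φ (v K) - φ (v 0) ∧ (∀ i < N, (v (i+1) < θ ↔ i < K)) := by
  induction N with
  | zero => exact ⟨0, le_rfl, by simp, fun i hi => absurd hi (Nat.not_lt_zero i)⟩
  | succ N ih =>
    obtain ⟨K, hKN, hsum, hiff⟩ := ih
    by_cases hcond : v (N+1) < θ
    · refine ⟨N+1, le_rfl, ?_, ?_⟩
      · have hKeqN : K = N := by
          rcases Nat.eq_zero_or_pos N with hN0 | hNpos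
          · omega
          · have : N - 1 < K := (hiff (N-1) (by omega)).mp
              (lt_of_le_of_lt (hv (by omega : N - 1 + 1 ≤ N + 1)) hcond)
            omega
        rw [Finset.sum_range_succ, if_pos hcond, hsum, hKeqN]
        ring
      · intro i hi
        constructor
        · intro _; exact hi
        · intro _
          exact lt_of_le_of_lt (hv (by omega : i + 1 ≤ N + 1)) hcond
    · refine ⟨K, by omega, ?_, ?_⟩
      · rw [Finset.sum_range_succ, if_neg hcond, hsum]; ring
      · intro i hi
        rcases Nat.lt_succ_iff_lt_or_eq.mp hi with h | rfl
        · exact hiff i h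
        · simp only [hcond, false_iff]
          omega

lemma stmt9_aux_exp1 {a b : ℝ} (hab : a ≤ b) :
    Real.exp (-b) * (b - a) ≤ Real.exp (-a) - Real.exp (-b) := by
  have h := Real.add_one_le_exp (b - a)
  have hpos : (0:ℝ) < Real.exp (-b) := Real.exp_pos _
  have : Real.exp (-b) * (b - a + 1) ≤ Real.exp (-b) * Real.exp (b - a) :=
    mul_le_mul_of_nonneg_left h hpos.le
  rw [← Real.exp_add] at this
  have hba : -b + (b - a) = -a := by ring
  rw [hba] at this
  nlinarith

lemma stmt9_aux_exp2 {a b : ℝ} (hab : a ≤ b) :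
    Real.exp (-a) - Real.exp (-b) - Real.exp (-b) * (b - a)
      ≤ (b - a) * (Real.exp (-a) - Real.exp (-b)) := by
  -- reduces to exp(-a) - exp(-b) ≤ (b-a) * exp(-a)
  have h := Real.add_one_le_exp (-(b - a))
  have hpos : (0:ℝ) < Real.exp (-a) := Real.exp_pos _
  have : Real.exp (-a) * (-(b - a) + 1) ≤ Real.exp (-a) * Real.exp (-(b - a)) :=
    mul_le_mul_of_nonneg_left h hpos.le
  rw [← Real.exp_add] at this
  have hba : -a + -(b - a) = -b := by ring
  rw [hba] at this
  have h2 : Real.exp (-b) ≤ Real.exp (-a) := Real.exp_le_exp.mpr (by linarith)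
  nlinarith

lemma stmt9_aux_ind {Ω : Type*} (S A B : Set Ω) (f : Ω → ℝ)
    (h : A ∩ S = B ∩ S) (hf : ∀ ω, ω ∉ S → f ω = 0) :
    A.indicator f = B.indicator f := by
  classical
  funext ω
  by_cases hω : ω ∈ S
  · have hmem : ω ∈ A ↔ ω ∈ B := by
      constructor
      · intro hh; exact ((Set.ext_iff.mp h ω).mp ⟨hh, hω⟩).1
      · intro hh; exact ((Set.ext_iff.mp h ω).mpr ⟨hh, hω⟩).1
    by_cases hωA : ω ∈ A
    · rw [Set.indicator_of_mem hωA, Set.indicator_of_mem (hmem.mp hωA)]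
    · rw [Set.indicator_of_notMem hωA,
        Set.indicator_of_notMem (fun hh => hωA (hmem.mpr hh))]
  · rw [Set.indicator_apply, Set.indicator_apply]
    split_ifs <;> simp [hf ω hω]

theorem stmt9 {Ω : Type*} {m𝔉 : MeasurableSpace Ω} (μ : Measure Ω) [IsProbabilityMeasure μ]
    (𝔉 : MeasureTheory.Filtration ℝ m𝔉)
    (τ : Ω → ℝ) (hτmeas : Measurable τ) (hτnn : ∀ ω, 0 ≤ τ ω)
    (Λ : ℝ → Ω → ℝ)
    (hΛadapted : ∀ t : ℝ, 0 ≤ t → Measurable[𝔉 t] (Λ t))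
    (hΛ0 : ∀ ω, Λ 0 ω = 0)
    (hΛnn : ∀ t : ℝ, 0 ≤ t → ∀ ω, 0 ≤ Λ t ω)
    (hΛmono : ∀ ω, MonotoneOn (fun t => Λ t ω) (Set.Ici 0))
    (hΛcont : ∀ ω, ContinuousOn (fun t => Λ t ω) (Set.Ici 0))
    (hΛtop : ∀ᵐ ω ∂μ, Filter.Tendsto (fun t => Λ t ω) Filter.atTop Filter.atTop)
    (hsurv : ∀ t : ℝ, 0 ≤ t →
      μ[Set.indicator {ω | t < τ ω} (fun _ => (1 : ℝ)) | 𝔉 t]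
        =ᵐ[μ] fun ω => Real.exp (-Λ t ω))
    (ℱ : ℝ → MeasurableSpace Ω)
    (hℱ : ∀ s : ℝ, ℱ s = 𝔉 s ⊔ MeasurableSpace.generateFrom
        {A | ∃ r : ℝ, 0 ≤ r ∧ r ≤ s ∧ A = {ω | r < τ ω}})
    (s t : ℝ) (hs : 0 ≤ s) (hst : s ≤ t) :
    Integrable (fun ω => Λ (min t (τ ω)) ω - Λ (min s (τ ω)) ω) μ ∧
    μ[fun ω => Λ (min t (τ ω)) ω - Λ (min s (τ ω)) ω | ℱ s]
      =ᵐ[μ] fun ω =>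
        Set.indicator {ω' | s < τ ω'} (fun _ => (1 : ℝ)) ω
          * (1 - (μ[fun ω' => Real.exp (-(Λ t ω' - Λ s ω')) | 𝔉 s]) ω) := by
  classical
  have hts : (0:ℝ) ≤ t := le_trans hs hst
  set S : Set Ω := {ω' | s < τ ω'} with hSdef
  have hSmeas : MeasurableSet S := measurableSet_lt measurable_const hτmeas
  have hleℱ : ℱ s ≤ m𝔉 := by
    rw [hℱ]
    refine sup_le (𝔉.le s) (MeasurableSpace.generateFrom_le ?_)
    rintro A ⟨r, hr0, hrs, rfl⟩
    exact measurableSet_lt measurable_const hτmeas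
  have hSℱ : MeasurableSet[ℱ s] S := by
    rw [hℱ]
    exact (le_sup_right : MeasurableSpace.generateFrom _ ≤ _) S
      (MeasurableSpace.measurableSet_generateFrom ⟨s, hs, le_rfl, rfl⟩)
  have h𝔉ℱ : 𝔉 s ≤ ℱ s := by rw [hℱ]; exact le_sup_left
  have hΛr : ∀ r : ℝ, 0 ≤ r → Measurable (Λ r) := fun r hr =>
    (hΛadapted r hr).mono (𝔉.le r) le_rfl
  -- the partition of [s,t]
  set msh : ℕ → ℝ := fun n => (t - s) / 2 ^ n with hmshdef
  set u : ℕ → ℕ → ℝ := fun n i => s + i * msh n with hudef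
  have hmshnn : ∀ n, 0 ≤ msh n := fun n =>
    div_nonneg (sub_nonneg.mpr hst) (by positivity)
  have hmshto : Filter.Tendsto msh Filter.atTop (nhds 0) := by
    have hh : msh = fun n => (t - s) * (1/2 : ℝ) ^ n := by
      funext n; simp only [hmshdef]; rw [div_pow]; ring
    rw [hh]
    simpa using tendsto_const_nhds.mul
      (tendsto_pow_atTop_nhds_zero_of_lt_one (by norm_num) (by norm_num : (1/2:ℝ) < 1))
  have hu0 : ∀ n, u n 0 = s := by intro n; simp [hudef]
  have huN : ∀ n, u n (2^n) = t := by
    intro n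
    have h2 : (2:ℝ)^n ≠ 0 := by positivity
    simp only [hudef, hmshdef]
    push_cast
    field_simp
    ring
  have humono : ∀ n, Monotone (u n) := by
    intro n i j hij
    simp only [hudef]
    have := mul_le_mul_of_nonneg_right (Nat.cast_le.mpr hij : (i:ℝ) ≤ j) (hmshnn n)
    linarith
  have hus : ∀ n i, s ≤ u n i := by
    intro n i
    have := humono n (Nat.zero_le i)
    rwa [hu0] at this
  have hut : ∀ n i, i ≤ 2^n → u n i ≤ t := by
    intro n i hi
    have := humono n hi
    rwa [huN] at this
  have hu_nn : ∀ n i, 0 ≤ u n i := fun n i => hs.trans (hus n i)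
  have hustep : ∀ n i, u n (i+1) = u n i + msh n := by
    intro n i; simp only [hudef]; push_cast; ring
  -- the approximating sums
  set X : Ω → ℝ := fun ω => Λ (min t (τ ω)) ω - Λ (min s (τ ω)) ω with hXdef
  set L : ℕ → Ω → ℝ := fun n ω => ∑ i ∈ Finset.range (2^n),
      if u n (i+1) < τ ω then Λ (u n (i+1)) ω - Λ (u n i) ω else 0 with hLdef
  set M : ℕ → Ω → ℝ := fun n ω => ∑ i ∈ Finset.range (2^n),
      Real.exp (-Λ (u n (i+1)) ω) * (Λ (u n (i+1)) ω - Λ (u n i) ω) with hMdef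
  have hΛle : ∀ ω {a b : ℝ}, 0 ≤ a → a ≤ b → Λ a ω ≤ Λ b ω := fun ω a b ha hab =>
    hΛmono ω (Set.mem_Ici.mpr ha) (Set.mem_Ici.mpr (ha.trans hab)) hab
  have hXnn : ∀ ω, 0 ≤ X ω := by
    intro ω
    have h1 : (0:ℝ) ≤ min s (τ ω) := le_min hs (hτnn ω)
    have h2 : min s (τ ω) ≤ min t (τ ω) := min_le_min hst le_rfl
    simp only [hXdef, sub_nonneg]
    exact hΛle ω h1 h2
  have hK : ∀ n ω, ∃ K, K ≤ 2^n ∧ L n ω = Λ (u n K) ω - Λ s ω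
      ∧ ∀ i < 2^n, (u n (i+1) < τ ω ↔ i < K) := by
    intro n ω
    obtain ⟨K, h1, h2, h3⟩ := stmt9_aux_tele (u n) (fun r => Λ r ω) (τ ω) (humono n) (2^n)
    refine ⟨K, h1, ?_, h3⟩
    rw [hLdef]
    simp only
    rw [h2, hu0]
  have hLbound : ∀ n ω, 0 ≤ L n ω ∧ L n ω ≤ X ω := by
    intro n ω
    obtain ⟨K, hKle, hLeq, hiff⟩ := hK n ω
    have husK : s ≤ u n K := hus n K
    constructor
    · rw [hLeq, sub_nonneg]
      exact hΛle ω hs husK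
    · rw [hLeq]
      rcases Nat.eq_zero_or_pos K with hK0 | hKpos
      · rw [hK0, hu0]
        simpa using hXnn ω
      · have hcond : u n K < τ ω := by
          have := (hiff (K-1) (by omega)).mpr (by omega)
          have hKK : K - 1 + 1 = K := by omega
          rwa [hKK] at this
        have huKmin : u n K ≤ min t (τ ω) :=
          le_min (hut n K hKle) hcond.le
        have h1 : Λ (u n K) ω ≤ Λ (min t (τ ω)) ω := hΛle ω (hu_nn n K) huKmin
        have h2 : Λ (min s (τ ω)) ω ≤ Λ s ω :=
          hΛle ω (le_min hs (hτnn ω)) (min_le_left _ _)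
        simp only [hXdef]
        linarith
  have hLtendsto : ∀ ω, Filter.Tendsto (fun n => L n ω) Filter.atTop (nhds (X ω)) := by
    intro ω
    rcases lt_or_ge t (τ ω) with hcase | hcase
    · -- τ ω > t : L n ω = Λ t - Λ s for every n
      have hLconst : ∀ n, L n ω = Λ t ω - Λ s ω := by
        intro n
        obtain ⟨K, hKle, hLeq, hiff⟩ := hK n ω
        have hKN : K = 2^n := by
          have hN : 0 < 2^n := Nat.pow_pos (by norm_num)
          have := (hiff (2^n - 1) (by omega)).mp
            (lt_of_le_of_lt (le_of_le_of_eq (hut n (2^n - 1 + 1) (by omega)) rfl) ?_)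
          · omega
          · exact hcase
        rw [hLeq, hKN, huN]
      have hXval : X ω = Λ t ω - Λ s ω := by
        simp only [hXdef, min_eq_left hcase.le, min_eq_left (hst.trans hcase.le)]
      rw [hXval]
      simp only [hLconst]
      exact tendsto_const_nhds
    · rcases le_or_gt (τ ω) s with hcase2 | hcase2
      · -- τ ω ≤ s : everything vanishes
        have hLconst : ∀ n, L n ω = 0 := by
          intro n
          obtain ⟨K, hKle, hLeq, hiff⟩ := hK n ω
          have hN : 0 < 2^n := Nat.pow_pos (by norm_num)
          have hK0 : K = 0 := by
            by_contra hne
            have := (hiff 0 hN).mpr (by omega)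
            have : τ ω ≤ u n (0+1) := le_trans hcase2 (hus n 1)
            have h2 := (hiff 0 hN).mpr (by omega)
            exact absurd h2 (not_lt.mpr this)
          rw [hLeq, hK0, hu0, sub_self]
        have hXval : X ω = 0 := by
          have h1 : min t (τ ω) = τ ω := min_eq_right (hcase2.trans hst)
          have h2 : min s (τ ω) = τ ω := min_eq_right hcase2
          simp only [hXdef, h1, h2, sub_self]
        rw [hXval]
        simp only [hLconst]
        exact tendsto_const_nhds
      · -- s < τ ω ≤ t
        have hXval : X ω = Λ (τ ω) ω - Λ s ω := by
          simp only [hXdef, min_eq_right hcase, min_eq_left hcase2.le]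
        choose K hKle hLeq hiff using fun n => hK n ω
        have hullt : ∀ n, u n (K n) < τ ω := by
          intro n
          rcases Nat.eq_zero_or_pos (K n) with h0 | hpos
          · rw [h0, hu0]; exact hcase2
          · have := (hiff n (K n - 1) (by have := hKle n; omega)).mpr (by omega)
            have hKK : K n - 1 + 1 = K n := by omega
            rwa [hKK] at this
        have hlb : ∀ n, τ ω - msh n ≤ u n (K n) := by
          intro n
          have hN : 0 < 2^n := Nat.pow_pos (by norm_num)
          have hKlt : K n < 2^n := by
            by_contra hge
            have hKN : K n = 2^n := by have := hKle n; omega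
            have := hullt n
            rw [hKN, huN] at this
            exact absurd this (not_lt.mpr hcase)
          have hnotlt : ¬ u n (K n + 1) < τ ω := by
            intro hlt
            have := (hiff n (K n) hKlt).mp hlt
            omega
          have := not_lt.mp hnotlt
          rw [hustep] at this
          linarith
        have huconv : Filter.Tendsto (fun n => u n (K n)) Filter.atTop (nhds (τ ω)) := by
          refine tendsto_of_tendsto_of_tendsto_of_le_of_le
            (g := fun n => τ ω - msh n) (h := fun _ => τ ω) ?_ ?_ hlb
            (fun n => (hullt n).le)
          · simpa using tendsto_const_nhds.sub hmshto
          · exact tendsto_const_nhds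
        have huconv' : Filter.Tendsto (fun n => u n (K n)) Filter.atTop
            (nhdsWithin (τ ω) (Set.Ici 0)) := by
          refine tendsto_nhdsWithin_of_tendsto_nhds_of_eventually_within _ huconv ?_
          exact Filter.Eventually.of_forall fun n => Set.mem_Ici.mpr (hu_nn n (K n))
        have hΛconv : Filter.Tendsto (fun n => Λ (u n (K n)) ω) Filter.atTop
            (nhds (Λ (τ ω) ω)) :=
          (hΛcont ω (τ ω) (Set.mem_Ici.mpr (hτnn ω))).tendsto.comp huconv'
        rw [hXval]
        simp only [hLeq]
        exact hΛconv.sub_const _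
  -- bounds and convergence for M
  have hEst_le_one : ∀ ω, Real.exp (-Λ s ω) - Real.exp (-Λ t ω) ≤ 1 := by
    intro ω
    have h1 : Real.exp (-Λ s ω) ≤ 1 := by
      rw [Real.exp_le_one_iff]
      simpa using hΛnn s hs ω
    have h2 : 0 < Real.exp (-Λ t ω) := Real.exp_pos _
    linarith
  have hEst_nn : ∀ ω, 0 ≤ Real.exp (-Λ s ω) - Real.exp (-Λ t ω) := by
    intro ω
    have := hΛle ω hs hst
    have := Real.exp_le_exp.mpr (neg_le_neg this)
    linarith
  have hMbound : ∀ n ω, 0 ≤ M n ω ∧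
      M n ω ≤ Real.exp (-Λ s ω) - Real.exp (-Λ t ω) := by
    intro n ω
    have hterm : ∀ i, 0 ≤ Real.exp (-Λ (u n (i+1)) ω) * (Λ (u n (i+1)) ω - Λ (u n i) ω) := by
      intro i
      have := hΛle ω (hu_nn n i) (humono n (Nat.le_succ i))
      have hE := Real.exp_pos (-Λ (u n (i+1)) ω)
      nlinarith
    constructor
    · rw [hMdef]
      exact Finset.sum_nonneg fun i _ => hterm i
    · rw [hMdef]
      have htele : ∑ i ∈ Finset.range (2^n),
          (Real.exp (-Λ (u n i) ω) - Real.exp (-Λ (u n (i+1)) ω))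
          = Real.exp (-Λ s ω) - Real.exp (-Λ t ω) := by
        rw [Finset.sum_range_sub' (fun i => Real.exp (-Λ (u n i) ω)), hu0, huN]
      rw [← htele]
      refine Finset.sum_le_sum fun i _ => ?_
      exact stmt9_aux_exp1 (hΛle ω (hu_nn n i) (humono n (Nat.le_succ i)))
  have hMtendsto : ∀ ω, Filter.Tendsto (fun n => M n ω) Filter.atTop
      (nhds (Real.exp (-Λ s ω) - Real.exp (-Λ t ω))) := by
    intro ω
    rw [Metric.tendsto_atTop]
    intro ε hε
    -- uniform continuity of r ↦ Λ r ω on [s,t]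
    have hcont : ContinuousOn (fun r => Λ r ω) (Set.Icc s t) :=
      (hΛcont ω).mono fun x hx => Set.mem_Ici.mpr (hs.trans hx.1)
    have hUC := IsCompact.uniformContinuousOn_of_continuous isCompact_Icc hcont
    obtain ⟨d, hd, hdprop⟩ := Metric.uniformContinuousOn_iff.mp hUC (ε/2) (by linarith)
    obtain ⟨N₀, hN₀⟩ := (Filter.tendsto_atTop'.mp hmshto) (Metric.ball 0 d)
      (Metric.ball_mem_nhds 0 hd)
    refine ⟨N₀, fun n hn => ?_⟩
    have hmsh_lt : msh n < d := by
      have := hN₀ n hn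
      rw [Metric.mem_ball, Real.dist_eq, sub_zero, abs_of_nonneg (hmshnn n)] at this
      exact this
    -- each increment of Λ along the partition is < ε/2
    have hinc : ∀ i, i < 2^n → Λ (u n (i+1)) ω - Λ (u n i) ω ≤ ε/2 := by
      intro i hi
      have hmemi : u n i ∈ Set.Icc s t := ⟨hus n i, hut n i (le_of_lt hi)⟩
      have hmemi1 : u n (i+1) ∈ Set.Icc s t := ⟨hus n (i+1), hut n (i+1) hi⟩
      have hdist : dist (u n (i+1)) (u n i) < d := by
        rw [Real.dist_eq, hustep, add_sub_cancel_left, abs_of_nonneg (hmshnn n)]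
        exact hmsh_lt
      have := hdprop _ hmemi1 _ hmemi hdist
      rw [Real.dist_eq] at this
      have habs := le_abs_self (Λ (u n (i+1)) ω - Λ (u n i) ω)
      linarith [habs.trans this.le]
    -- sum of the errors
    have herr : Real.exp (-Λ s ω) - Real.exp (-Λ t ω) - M n ω ≤ ε/2 := by
      have htele : ∑ i ∈ Finset.range (2^n),
          (Real.exp (-Λ (u n i) ω) - Real.exp (-Λ (u n (i+1)) ω))
          = Real.exp (-Λ s ω) - Real.exp (-Λ t ω) := by
        rw [Finset.sum_range_sub' (fun i => Real.exp (-Λ (u n i) ω)), hu0, huN]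
      rw [← htele, hMdef]
      simp only
      rw [← Finset.sum_sub_distrib]
      have hbd : ∀ i ∈ Finset.range (2^n),
          Real.exp (-Λ (u n i) ω) - Real.exp (-Λ (u n (i+1)) ω)
            - Real.exp (-Λ (u n (i+1)) ω) * (Λ (u n (i+1)) ω - Λ (u n i) ω)
          ≤ (ε/2) * (Real.exp (-Λ (u n i) ω) - Real.exp (-Λ (u n (i+1)) ω)) := by
        intro i hi
        have hab : Λ (u n i) ω ≤ Λ (u n (i+1)) ω :=
          hΛle ω (hu_nn n i) (humono n (Nat.le_succ i))
        refine le_trans (stmt9_aux_exp2 hab) ?_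
        refine mul_le_mul_of_nonneg_right ?_ ?_
        · exact hinc i (Finset.mem_range.mp hi)
        · have := Real.exp_le_exp.mpr (neg_le_neg hab)
          linarith
      refine le_trans (Finset.sum_le_sum hbd) ?_
      rw [← Finset.mul_sum]
      have htele2 : ∑ i ∈ Finset.range (2^n),
          (Real.exp (-Λ (u n i) ω) - Real.exp (-Λ (u n (i+1)) ω))
          = Real.exp (-Λ s ω) - Real.exp (-Λ t ω) := by
        rw [Finset.sum_range_sub' (fun i => Real.exp (-Λ (u n i) ω)), hu0, huN]
      rw [htele2]
      have h1 := hEst_le_one ω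
      have h2 := hEst_nn ω
      nlinarith
    have hM_le := (hMbound n ω).2
    rw [Real.dist_eq, abs_of_nonpos (by linarith), neg_sub]
    linarith
  -- measurability
  have hLmeas : ∀ n, Measurable (L n) := by
    intro n
    rw [hLdef]
    refine Finset.measurable_sum _ fun i _ => ?_
    refine Measurable.ite (measurableSet_lt measurable_const hτmeas) ?_ measurable_const
    exact (hΛr _ (hu_nn n (i+1))).sub (hΛr _ (hu_nn n i))
  have hMmeas : ∀ n, Measurable (M n) := by
    intro n
    rw [hMdef]
    refine Finset.measurable_sum _ fun i _ => ?_
    exact (Real.measurable_exp.comp (hΛr _ (hu_nn n (i+1))).neg).mul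
      ((hΛr _ (hu_nn n (i+1))).sub (hΛr _ (hu_nn n i)))
  have hXmeas : Measurable X :=
    measurable_of_tendsto_metrizable hLmeas (tendsto_pi_nhds.mpr hLtendsto)
  have hΔnn : ∀ n i ω, 0 ≤ Λ (u n (i+1)) ω - Λ (u n i) ω := by
    intro n i ω
    have := hΛle ω (hu_nn n i) (humono n (Nat.le_succ i))
    linarith
  -- the key lintegral identity
  have hkey : ∀ n, ∀ B : Set Ω, MeasurableSet[𝔉 s] B →
      ∫⁻ ω in B, ENNReal.ofReal (L n ω) ∂μ = ∫⁻ ω in B, ENNReal.ofReal (M n ω) ∂μ := by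
    intro n B hB
    have hB0 : MeasurableSet B := 𝔉.le s B hB
    -- measurable pieces
    set Δ : ℕ → Ω → ℝ := fun i ω => Λ (u n (i+1)) ω - Λ (u n i) ω with hΔdef
    have hΔmeas : ∀ i, Measurable[𝔉 (u n (i+1))] (Δ i) := by
      intro i
      refine ((hΛadapted _ (hu_nn n (i+1))).sub ?_)
      exact (hΛadapted _ (hu_nn n i)).mono (𝔉.mono (humono n (Nat.le_succ i))) le_rfl
    have hBmemi : ∀ i, MeasurableSet[𝔉 (u n (i+1))] B := fun i =>
      (𝔉.mono (hus n (i+1))) B hB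
    have hterm : ∀ i, i < 2^n →
        ∫⁻ ω in B, Set.indicator {ω | u n (i+1) < τ ω}
            (fun ω => ENNReal.ofReal (Δ i ω)) ω ∂μ
          = ∫⁻ ω in B, ENNReal.ofReal (Real.exp (-Λ (u n (i+1)) ω) * Δ i ω) ∂μ := by
      intro i hi
      have hSi : MeasurableSet {ω | u n (i+1) < τ ω} :=
        measurableSet_lt measurable_const hτmeas
      have hg : Measurable[𝔉 (u n (i+1))]
          (B.indicator (fun ω => ENNReal.ofReal (Δ i ω))) :=
        ((hΔmeas i).ennreal_ofReal).indicator (hBmemi i)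
      have haux := stmt9_aux_lint μ (𝔉.le (u n (i+1))) hτmeas (u n (i+1))
        (Real.measurable_exp.comp (hΛadapted _ (hu_nn n (i+1))).neg)
        (fun ω => (Real.exp_pos _).le)
        (fun ω => Real.exp_le_one_iff.mpr (neg_nonpos.mpr (hΛnn _ (hu_nn n (i+1)) ω)))
        (hsurv _ (hu_nn n (i+1))) hg
      calc ∫⁻ ω in B, Set.indicator {ω | u n (i+1) < τ ω}
              (fun ω => ENNReal.ofReal (Δ i ω)) ω ∂μ
          = ∫⁻ ω, B.indicator (Set.indicator {ω | u n (i+1) < τ ω}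
              (fun ω => ENNReal.ofReal (Δ i ω))) ω ∂μ := by
            rw [lintegral_indicator hB0]
        _ = ∫⁻ ω, Set.indicator {ω | u n (i+1) < τ ω}
              (B.indicator (fun ω => ENNReal.ofReal (Δ i ω))) ω ∂μ := by
            rw [Set.indicator_indicator, Set.indicator_indicator, Set.inter_comm]
        _ = ∫⁻ ω in {ω | u n (i+1) < τ ω},
              B.indicator (fun ω => ENNReal.ofReal (Δ i ω)) ω ∂μ := by
            rw [lintegral_indicator hSi]
        _ = ∫⁻ ω, B.indicator (fun ω => ENNReal.ofReal (Δ i ω)) ω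
              * ENNReal.ofReal (Real.exp (-Λ (u n (i+1)) ω)) ∂μ := haux
        _ = ∫⁻ ω, B.indicator (fun ω => ENNReal.ofReal (Real.exp (-Λ (u n (i+1)) ω) * Δ i ω)) ω ∂μ := by
            refine lintegral_congr fun ω => ?_
            by_cases hω : ω ∈ B
            · simp only [Set.indicator_of_mem hω]
              rw [mul_comm, ← ENNReal.ofReal_mul (Real.exp_pos _).le]
            · simp [Set.indicator_of_notMem hω]
        _ = ∫⁻ ω in B, ENNReal.ofReal (Real.exp (-Λ (u n (i+1)) ω) * Δ i ω) ∂μ := by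
            rw [lintegral_indicator hB0]
    calc ∫⁻ ω in B, ENNReal.ofReal (L n ω) ∂μ
        = ∫⁻ ω in B, ∑ i ∈ Finset.range (2^n),
            Set.indicator {ω | u n (i+1) < τ ω} (fun ω => ENNReal.ofReal (Δ i ω)) ω ∂μ := by
          refine lintegral_congr fun ω => ?_
          rw [hLdef]
          simp only
          rw [ENNReal.ofReal_sum_of_nonneg (fun i _ => by
            split_ifs with h
            · exact hΔnn n i ω
            · exact le_rfl)]
          refine Finset.sum_congr rfl fun i _ => ?_
          by_cases hω : u n (i+1) < τ ω
          · rw [if_pos hω, Set.indicator_of_mem (by exact hω)]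
          · rw [if_neg hω, Set.indicator_of_notMem (by exact hω), ENNReal.ofReal_zero]
      _ = ∑ i ∈ Finset.range (2^n), ∫⁻ ω in B,
            Set.indicator {ω | u n (i+1) < τ ω} (fun ω => ENNReal.ofReal (Δ i ω)) ω ∂μ := by
          refine lintegral_finset_sum _ fun i _ => ?_
          exact (((hΔmeas i).mono (𝔉.le _) le_rfl).ennreal_ofReal).indicator
            (measurableSet_lt measurable_const hτmeas)
      _ = ∑ i ∈ Finset.range (2^n), ∫⁻ ω in B,
            ENNReal.ofReal (Real.exp (-Λ (u n (i+1)) ω) * Δ i ω) ∂μ := by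
          refine Finset.sum_congr rfl fun i hi => hterm i (Finset.mem_range.mp hi)
      _ = ∫⁻ ω in B, ∑ i ∈ Finset.range (2^n),
            ENNReal.ofReal (Real.exp (-Λ (u n (i+1)) ω) * Δ i ω) ∂μ := by
          refine (lintegral_finset_sum _ fun i _ => ?_).symm
          exact ((Real.measurable_exp.comp (hΛr _ (hu_nn n (i+1))).neg).mul
            (((hΔmeas i).mono (𝔉.le _) le_rfl))).ennreal_ofReal
      _ = ∫⁻ ω in B, ENNReal.ofReal (M n ω) ∂μ := by
          refine lintegral_congr fun ω => ?_
          rw [hMdef]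
          simp only
          rw [ENNReal.ofReal_sum_of_nonneg (fun i _ => ?_)]
          have := hΔnn n i ω
          have := (Real.exp_pos (-Λ (u n (i+1)) ω)).le
          exact mul_nonneg (Real.exp_pos _).le (hΔnn n i ω)
  -- the global lintegral bound
  have hMofReal_le_one : ∀ n ω, ENNReal.ofReal (M n ω) ≤ 1 := by
    intro n ω
    refine ENNReal.ofReal_le_one.mpr ?_
    exact le_trans (hMbound n ω).2 (hEst_le_one ω)
  have hLint_le_one : ∀ n, ∫⁻ ω, ENNReal.ofReal (L n ω) ∂μ ≤ 1 := by
    intro n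
    have huniv : MeasurableSet[𝔉 s] (Set.univ : Set Ω) := MeasurableSet.univ
    have := hkey n Set.univ huniv
    rw [Measure.restrict_univ] at this
    rw [this]
    calc ∫⁻ ω, ENNReal.ofReal (M n ω) ∂μ ≤ ∫⁻ _, 1 ∂μ :=
          lintegral_mono fun ω => hMofReal_le_one n ω
      _ = 1 := by simp
  have hXlint : ∫⁻ ω, ENNReal.ofReal (X ω) ∂μ ≤ 1 := by
    have hpt : (fun ω => ENNReal.ofReal (X ω))
        = fun ω => Filter.liminf (fun n => ENNReal.ofReal (L n ω)) Filter.atTop := by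
      funext ω
      exact (((ENNReal.continuous_ofReal.tendsto _).comp (hLtendsto ω)).liminf_eq).symm
    rw [hpt]
    refine le_trans (lintegral_liminf_le fun n => (hLmeas n).ennreal_ofReal) ?_
    refine le_trans (Filter.liminf_le_liminf
      (Filter.Eventually.of_forall fun n => hLint_le_one n)) ?_
    simp
  have hXint : Integrable X μ := by
    refine ⟨hXmeas.aestronglyMeasurable, ?_⟩
    rw [hasFiniteIntegral_iff_ofReal (Filter.Eventually.of_forall hXnn)]
    exact lt_of_le_of_lt hXlint ENNReal.one_lt_top
  -- the set-integral identity over 𝔉 s sets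
  have hEstmeas : Measurable (fun ω => Real.exp (-Λ s ω) - Real.exp (-Λ t ω)) :=
    (Real.measurable_exp.comp (hΛr s hs).neg).sub (Real.measurable_exp.comp (hΛr t hts).neg)
  have hstar : ∀ B : Set Ω, MeasurableSet[𝔉 s] B →
      ∫ ω in B, X ω ∂μ = ∫ ω in B, (Real.exp (-Λ s ω) - Real.exp (-Λ t ω)) ∂μ := by
    intro B hB
    have hB0 : MeasurableSet B := 𝔉.le s B hB
    have l1 : Filter.Tendsto (fun n => ∫⁻ ω in B, ENNReal.ofReal (L n ω) ∂μ)
        Filter.atTop (nhds (∫⁻ ω in B, ENNReal.ofReal (X ω) ∂μ)) := by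
      refine tendsto_lintegral_of_dominated_convergence
        (fun ω => ENNReal.ofReal (X ω)) (fun n => (hLmeas n).ennreal_ofReal) ?_ ?_ ?_
      · intro n
        refine Filter.Eventually.of_forall fun ω => ?_
        exact ENNReal.ofReal_le_ofReal (hLbound n ω).2
      · refine ne_of_lt (lt_of_le_of_lt ?_ ENNReal.one_lt_top)
        exact le_trans (lintegral_mono' Measure.restrict_le_self le_rfl) hXlint
      · refine Filter.Eventually.of_forall fun ω => ?_
        exact (ENNReal.continuous_ofReal.tendsto _).comp (hLtendsto ω)
    have l2 : Filter.Tendsto (fun n => ∫⁻ ω in B, ENNReal.ofReal (M n ω) ∂μ)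
        Filter.atTop
        (nhds (∫⁻ ω in B, ENNReal.ofReal (Real.exp (-Λ s ω) - Real.exp (-Λ t ω)) ∂μ)) := by
      refine tendsto_lintegral_of_dominated_convergence
        (fun _ => 1) (fun n => (hMmeas n).ennreal_ofReal) ?_ ?_ ?_
      · intro n
        exact Filter.Eventually.of_forall fun ω => hMofReal_le_one n ω
      · simp only [lintegral_one]
        exact (lt_of_le_of_lt (measure_mono (Set.subset_univ _))
          (measure_lt_top (μ.restrict B) Set.univ)).ne
      · refine Filter.Eventually.of_forall fun ω => ?_
        exact (ENNReal.continuous_ofReal.tendsto _).comp (hMtendsto ω)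
    have leq : ∫⁻ ω in B, ENNReal.ofReal (X ω) ∂μ
        = ∫⁻ ω in B, ENNReal.ofReal (Real.exp (-Λ s ω) - Real.exp (-Λ t ω)) ∂μ := by
      refine tendsto_nhds_unique ?_ l2
      have : (fun n => ∫⁻ ω in B, ENNReal.ofReal (L n ω) ∂μ)
          = fun n => ∫⁻ ω in B, ENNReal.ofReal (M n ω) ∂μ := funext fun n => hkey n B hB
      rw [← this]
      exact l1
    rw [integral_eq_lintegral_of_nonneg_ae (Filter.Eventually.of_forall hXnn)
        hXmeas.aestronglyMeasurable,
      integral_eq_lintegral_of_nonneg_ae (Filter.Eventually.of_forall hEst_nn)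
        hEstmeas.aestronglyMeasurable, leq]
  -- the conditional-expectation side
  set g : Ω → ℝ := fun ω' => Real.exp (-(Λ t ω' - Λ s ω')) with hgdef
  have hgmeas : Measurable g := Real.measurable_exp.comp ((hΛr t hts).sub (hΛr s hs)).neg
  have hg_nn : ∀ ω, 0 ≤ g ω := fun ω => (Real.exp_pos _).le
  have hg_le1 : ∀ ω, g ω ≤ 1 := by
    intro ω
    rw [hgdef]
    refine Real.exp_le_one_iff.mpr ?_
    simp only [neg_nonpos, sub_nonneg]
    exact hΛle ω hs hst
  have hgint : Integrable g μ :=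
    Integrable.mono' (integrable_const 1) hgmeas.aestronglyMeasurable
      (Filter.Eventually.of_forall fun ω => by
        rw [Real.norm_eq_abs, abs_of_nonneg (hg_nn ω)]; exact hg_le1 ω)
  set Y : Ω → ℝ := μ[g|𝔉 s] with hYdef
  have hYint : Integrable Y μ := integrable_condExp
  have hYSM : StronglyMeasurable[𝔉 s] Y := stronglyMeasurable_condExp
  have hRHS_SM : StronglyMeasurable[ℱ s]
      (fun ω => S.indicator (fun _ => (1:ℝ)) ω * (1 - Y ω)) :=
    (stronglyMeasurable_const.indicator hSℱ).mul
      (stronglyMeasurable_const.sub (hYSM.mono h𝔉ℱ))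
  have hRHSint : Integrable (fun ω => S.indicator (fun _ => (1:ℝ)) ω * (1 - Y ω)) μ := by
    have hbnd : Integrable (fun ω => |1 - Y ω|) μ :=
      ((integrable_const (1:ℝ)).sub hYint).abs
    refine Integrable.mono' hbnd
      ((hRHS_SM.mono hleℱ).aestronglyMeasurable) ?_
    refine Filter.Eventually.of_forall fun ω => ?_
    rw [Real.norm_eq_abs, abs_mul]
    have h1 : |S.indicator (fun _ => (1:ℝ)) ω| ≤ 1 := by
      by_cases hω : ω ∈ S <;> simp [Set.indicator_apply, hω]
    have h2 : (0:ℝ) ≤ |1 - Y ω| := abs_nonneg _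
    calc |S.indicator (fun _ => (1:ℝ)) ω| * |1 - Y ω| ≤ 1 * |1 - Y ω| :=
          mul_le_mul_of_nonneg_right h1 h2
      _ = |1 - Y ω| := one_mul _
  -- integrable auxiliary functions
  have hindSint : Integrable (S.indicator fun _ => (1:ℝ)) μ := by
    refine Integrable.mono' (integrable_const (1:ℝ))
      (aestronglyMeasurable_const.indicator hSmeas) ?_
    refine Filter.Eventually.of_forall fun ω => ?_
    by_cases hω : ω ∈ S <;> simp [Set.indicator_apply, hω]
  have hEsmeas𝔉 : Measurable[𝔉 s] (fun ω => Real.exp (-Λ s ω)) :=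
    Real.measurable_exp.comp (hΛadapted s hs).neg
  have hEs_le1 : ∀ ω, Real.exp (-Λ s ω) ≤ 1 := fun ω =>
    Real.exp_le_one_iff.mpr (neg_nonpos.mpr (hΛnn s hs ω))
  have hEt_le1 : ∀ ω, Real.exp (-Λ t ω) ≤ 1 := fun ω =>
    Real.exp_le_one_iff.mpr (neg_nonpos.mpr (hΛnn t hts ω))
  have hEsint : Integrable (fun ω => Real.exp (-Λ s ω)) μ := by
    refine Integrable.mono' (integrable_const (1:ℝ))
      ((hEsmeas𝔉.mono (𝔉.le s) le_rfl).aestronglyMeasurable) ?_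
    exact Filter.Eventually.of_forall fun ω => by
      rw [Real.norm_eq_abs, abs_of_nonneg (Real.exp_pos _).le]; exact hEs_le1 ω
  have hEtint : Integrable (fun ω => Real.exp (-Λ t ω)) μ := by
    refine Integrable.mono' (integrable_const (1:ℝ))
      ((Real.measurable_exp.comp (hΛr t hts).neg).aestronglyMeasurable) ?_
    exact Filter.Eventually.of_forall fun ω => by
      rw [Real.norm_eq_abs, abs_of_nonneg (Real.exp_pos _).le]; exact hEt_le1 ω
  -- the main set-integral computation over ℱ s sets
  have hg_eq : ∀ A : Set Ω, MeasurableSet[ℱ s] A → μ A < ⊤ →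
      ∫ ω in A, S.indicator (fun _ => (1:ℝ)) ω * (1 - Y ω) ∂μ
        = ∫ ω in A, X ω ∂μ := by
    intro A hA _
    have hA' := hA
    rw [hℱ] at hA'
    obtain ⟨B, hB, hABS⟩ := stmt9_aux_sigma (𝔉 s) τ s hs A hA'
    have hA0 : MeasurableSet A := hleℱ A hA
    have hB0 : MeasurableSet B := 𝔉.le s B hB
    have hXoff : ∀ ω, ω ∉ S → X ω = 0 := by
      intro ω hω
      have hτle : τ ω ≤ s := not_lt.mp hω
      simp only [hXdef, min_eq_right (hτle.trans hst), min_eq_right hτle, sub_self]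
    have hRHSoff : ∀ ω, ω ∉ S → S.indicator (fun _ => (1:ℝ)) ω * (1 - Y ω) = 0 := by
      intro ω hω
      rw [Set.indicator_of_notMem hω, zero_mul]
    have hXAB : ∫ ω in A, X ω ∂μ = ∫ ω in B, X ω ∂μ := by
      rw [← integral_indicator hA0, ← integral_indicator hB0,
        stmt9_aux_ind S A B X hABS hXoff]
    have hRAB : ∫ ω in A, S.indicator (fun _ => (1:ℝ)) ω * (1 - Y ω) ∂μ
        = ∫ ω in B, S.indicator (fun _ => (1:ℝ)) ω * (1 - Y ω) ∂μ := by
      rw [← integral_indicator hA0, ← integral_indicator hB0,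
        stmt9_aux_ind S A B _ hABS hRHSoff]
    -- the computation over B
    set Z : Ω → ℝ := B.indicator (fun ω => 1 - Y ω) with hZdef
    have hZSM : StronglyMeasurable[𝔉 s] Z :=
      (stronglyMeasurable_const.sub hYSM).indicator hB
    have hZint : Integrable Z μ := ((integrable_const (1:ℝ)).sub hYint).indicator hB0
    have hZS_int : Integrable (Z * S.indicator fun _ => (1:ℝ)) μ := by
      refine Integrable.mono' hZint.abs
        (((hZSM.mono (𝔉.le s)).mul
          (stronglyMeasurable_const.indicator hSmeas)).aestronglyMeasurable) ?_
      refine Filter.Eventually.of_forall fun ω => ?_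
      rw [Pi.mul_apply, Real.norm_eq_abs, abs_mul]
      have h1 : |S.indicator (fun _ => (1:ℝ)) ω| ≤ 1 := by
        by_cases hω : ω ∈ S <;> simp [Set.indicator_apply, hω]
      calc |Z ω| * |S.indicator (fun _ => (1:ℝ)) ω| ≤ |Z ω| * 1 :=
            mul_le_mul_of_nonneg_left h1 (abs_nonneg _)
        _ = |Z ω| := mul_one _
    have hpull := condExp_mul_of_stronglyMeasurable_left hZSM hZS_int hindSint
    have step1 : ∫ ω in B, S.indicator (fun _ => (1:ℝ)) ω * (1 - Y ω) ∂μ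
        = ∫ ω, (Z * S.indicator fun _ => (1:ℝ)) ω ∂μ := by
      rw [← integral_indicator hB0]
      refine integral_congr_ae (Filter.Eventually.of_forall fun ω => ?_)
      rw [Pi.mul_apply, hZdef]
      by_cases hω : ω ∈ B
      · rw [Set.indicator_of_mem hω, Set.indicator_of_mem hω, mul_comm]
      · rw [Set.indicator_of_notMem hω, Set.indicator_of_notMem hω, zero_mul]
    have step2 : ∫ ω, (Z * S.indicator fun _ => (1:ℝ)) ω ∂μ
        = ∫ ω, Z ω * Real.exp (-Λ s ω) ∂μ := by
      have hmul : Z * μ[S.indicator fun _ => (1:ℝ)|𝔉 s]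
          =ᵐ[μ] fun ω => Z ω * Real.exp (-Λ s ω) :=
        (hsurv s hs).mono fun ω h => by rw [Pi.mul_apply, h]
      calc ∫ ω, (Z * S.indicator fun _ => (1:ℝ)) ω ∂μ
          = ∫ ω, (μ[Z * S.indicator fun _ => (1:ℝ)|𝔉 s]) ω ∂μ :=
            (integral_condExp (𝔉.le s)).symm
        _ = ∫ ω, Z ω * Real.exp (-Λ s ω) ∂μ :=
            integral_congr_ae (hpull.trans hmul)
    have step3 : ∫ ω, Z ω * Real.exp (-Λ s ω) ∂μ
        = ∫ ω in B, (1 - Y ω) * Real.exp (-Λ s ω) ∂μ := by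
      rw [← integral_indicator hB0]
      refine integral_congr_ae (Filter.Eventually.of_forall fun ω => ?_)
      rw [hZdef]
      by_cases hω : ω ∈ B
      · simp only [Set.indicator_of_mem hω]
      · simp only [Set.indicator_of_notMem hω, zero_mul]
    -- ∫_B Y * E_s = ∫_B E_t
    have hEsg_int : Integrable ((fun ω => Real.exp (-Λ s ω)) * g) μ := by
      refine Integrable.mono' (integrable_const (1:ℝ))
        (((hEsmeas𝔉.mono (𝔉.le s) le_rfl).aestronglyMeasurable).mul
          hgmeas.aestronglyMeasurable) ?_
      refine Filter.Eventually.of_forall fun ω => ?_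
      rw [Pi.mul_apply, Real.norm_eq_abs, abs_mul,
        abs_of_nonneg (Real.exp_pos _).le, abs_of_nonneg (hg_nn ω)]
      calc Real.exp (-Λ s ω) * g ω ≤ 1 * 1 :=
            mul_le_mul (hEs_le1 ω) (hg_le1 ω) (hg_nn ω) zero_le_one
        _ = 1 := one_mul 1
    have hpull2 := condExp_mul_of_stronglyMeasurable_left
      (hEsmeas𝔉.stronglyMeasurable) hEsg_int hgint
    have hEsg : (fun ω => Real.exp (-Λ s ω)) * g = fun ω => Real.exp (-Λ t ω) := by
      funext ω
      rw [Pi.mul_apply, hgdef, ← Real.exp_add]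
      ring_nf
    have step5 : ∫ ω in B, Y ω * Real.exp (-Λ s ω) ∂μ = ∫ ω in B, Real.exp (-Λ t ω) ∂μ := by
      have hEt_eq : μ[fun ω => Real.exp (-Λ t ω)|𝔉 s]
          =ᵐ[μ] fun ω => Real.exp (-Λ s ω) * Y ω := by
        rw [← hEsg]
        exact hpull2
      calc ∫ ω in B, Y ω * Real.exp (-Λ s ω) ∂μ
          = ∫ ω in B, (μ[fun ω => Real.exp (-Λ t ω)|𝔉 s]) ω ∂μ := by
            refine (setIntegral_congr_ae hB0 (hEt_eq.mono fun ω h _ => ?_)).symm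
            rw [h, mul_comm]
        _ = ∫ ω in B, Real.exp (-Λ t ω) ∂μ := setIntegral_condExp (𝔉.le s) hEtint hB
    have step4 : ∫ ω in B, (1 - Y ω) * Real.exp (-Λ s ω) ∂μ
        = ∫ ω in B, (Real.exp (-Λ s ω) - Real.exp (-Λ t ω)) ∂μ := by
      have hYEs_int : IntegrableOn (fun ω => Y ω * Real.exp (-Λ s ω)) B μ := by
        refine Integrable.integrableOn ?_
        refine Integrable.mono' hYint.abs
          (((hYSM.mono (𝔉.le s)).aestronglyMeasurable).mul
            ((hEsmeas𝔉.mono (𝔉.le s) le_rfl).aestronglyMeasurable)) ?_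
        refine Filter.Eventually.of_forall fun ω => ?_
        rw [Real.norm_eq_abs, abs_mul, abs_of_nonneg (Real.exp_pos _).le]
        calc |Y ω| * Real.exp (-Λ s ω) ≤ |Y ω| * 1 :=
              mul_le_mul_of_nonneg_left (hEs_le1 ω) (abs_nonneg _)
          _ = |Y ω| := mul_one _
      have hsplit : ∀ ω, (1 - Y ω) * Real.exp (-Λ s ω)
          = Real.exp (-Λ s ω) - Y ω * Real.exp (-Λ s ω) := fun ω => by ring
      simp only [hsplit]
      rw [integral_sub hEsint.integrableOn hYEs_int, step5,
        integral_sub hEsint.integrableOn hEtint.integrableOn]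
    rw [hRAB, step1, step2, step3, step4, ← hstar B hB, hXAB]
  -- conclusion
  refine ⟨hXint, ?_⟩
  exact (ae_eq_condExp_of_forall_setIntegral_eq hleℱ hXint
    (fun A hA _ => hRHSint.integrableOn) hg_eq
    (hRHS_SM.aestronglyMeasurable)).symm
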